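/- Let k < l be natural numbers with gcd(k,l) = 1 and k + l odd (equivalently, kl even). Then the sequence a : ℕ → ℝ defined by a(n) = (1 + (-1)^(⌊n/k⌋+1))/2 for 0 ≤ n < l and a(n) = 1 - (a(n-k) + a(n-l))/2 for n ≥ l converges to 1/2 as n → ∞. -/
import Mathlib

open Filter

private lemma mystep (k l : ℕ) (hkl : k < l) (b : ℕ → ℝ)
    (hrec : ∀ n, l ≤ n → b n = -(b (n - k) + b (n - l)) / 2)
    (n₀ : ℕ) (M : ℝ) (hb : ∀ m, n₀ ≤ m → |b m| ≤ M)
    (ε γ : ℝ) (hε : ε = 1 ∨ ε = -1) (p : ℕ) (hp : n₀ + l ≤ p)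
    (h : γ * M < ε * b p) :
    (2 * γ - 1) * M < -(ε * b (p - k)) ∧ (2 * γ - 1) * M < -(ε * b (p - l)) := by
  have hl : l ≤ p := by omega
  have hrp := hrec p hl
  have hbk := hb (p - k) (by omega)
  have hbl := hb (p - l) (by omega)
  have h1k : -|b (p - k)| ≤ ε * b (p - k) := by
    rcases hε with rfl | rfl
    · simpa using neg_abs_le _
    · simpa using le_abs_self _
  have h1l : -|b (p - l)| ≤ ε * b (p - l) := by
    rcases hε with rfl | rfl
    · simpa using neg_abs_le _
    · simpa using le_abs_self _
  have key : ε * b p = -(ε * b (p - k) + ε * b (p - l)) / 2 := by rw [hrp]; ring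
  constructor <;> nlinarith [hbk, hbl, h1k, h1l]

private lemma mychain (k l : ℕ) (hkl : k < l) (b : ℕ → ℝ)
    (hrec : ∀ n, l ≤ n → b n = -(b (n - k) + b (n - l)) / 2)
    (n₀ : ℕ) (M : ℝ) (hb : ∀ m, n₀ ≤ m → |b m| ≤ M)
    (s : ℕ) (hs : s = k ∨ s = l) :
    ∀ j (ε : ℝ), (ε = 1 ∨ ε = -1) → ∀ (γ : ℝ) (m : ℕ), n₀ + l + j * s ≤ m →
      γ * M < ε * b m →
      (2 ^ j * (γ - 1) + 1) * M < ((-1 : ℝ) ^ j * ε) * b (m - j * s) := by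
  intro j
  induction j with
  | zero =>
    intro ε hε γ m hm h
    have e1 : ((2 : ℝ) ^ 0 * (γ - 1) + 1) = γ := by ring
    have e2 : ((-1 : ℝ) ^ 0 * ε) = ε := by ring
    rw [e1, e2]
    simpa using h
  | succ j ih =>
    intro ε hε γ m hm h
    have hsl : s ≤ l := by rcases hs with rfl | rfl <;> omega
    have hmul : (j + 1) * s = j * s + s := by ring
    have hstep := mystep k l hkl b hrec n₀ M hb ε γ hε m (by omega) h
    have h'0 : (2 * γ - 1) * M < -(ε * b (m - s)) := by
      rcases hs with hs | hs
      · rw [hs]; exact hstep.1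
      · rw [hs]; exact hstep.2
    have h' : (2 * γ - 1) * M < (-ε) * b (m - s) := by
      have e : (-ε) * b (m - s) = -(ε * b (m - s)) := by ring
      rw [e]; exact h'0
    have hε' : (-ε : ℝ) = 1 ∨ (-ε : ℝ) = -1 := by rcases hε with rfl | rfl <;> simp
    have hrecur := ih (-ε) hε' (2 * γ - 1) (m - s) (by omega) h'
    have hsub : m - s - j * s = m - (j + 1) * s := by omega
    rw [hsub] at hrecur
    calc (2 ^ (j + 1) * (γ - 1) + 1) * M = (2 ^ j * ((2 * γ - 1) - 1) + 1) * M := by ring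
      _ < ((-1 : ℝ) ^ j * (-ε)) * b (m - (j + 1) * s) := hrecur
      _ = ((-1 : ℝ) ^ (j + 1) * ε) * b (m - (j + 1) * s) := by ring

private lemma mycontract (k l : ℕ) (hkl : k < l) (hodd : Odd (k + l)) (b : ℕ → ℝ)
    (hrec : ∀ n, l ≤ n → b n = -(b (n - k) + b (n - l)) / 2)
    (n₀ : ℕ) (M : ℝ) (hM : 0 ≤ M) (hb : ∀ m, n₀ ≤ m → |b m| ≤ M) :
    ∀ m, n₀ + l + k * l ≤ m → |b m| ≤ (1 - (1/2) ^ (l + 1)) * M := by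
  intro m hm
  by_contra hcon
  push_neg at hcon
  obtain ⟨ε, hε, hεb⟩ : ∃ ε : ℝ, (ε = 1 ∨ ε = -1) ∧ (1 - (1/2 : ℝ) ^ (l + 1)) * M < ε * b m := by
    rcases lt_abs.mp hcon with h | h
    · exact ⟨1, Or.inl rfl, by rw [one_mul]; exact h⟩
    · exact ⟨-1, Or.inr rfl, by rw [neg_one_mul]; exact h⟩
  have hA := mychain k l hkl b hrec n₀ M hb k (Or.inl rfl) l ε hε _ m
    (by rw [Nat.mul_comm l k]; exact hm) hεb
  have hB := mychain k l hkl b hrec n₀ M hb l (Or.inr rfl) k ε hε _ m hm hεb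
  rw [show m - l * k = m - k * l from by rw [Nat.mul_comm]] at hA
  set x := b (m - k * l) with hx
  have hml : (2 : ℝ) ^ l * (1/2) ^ l = 1 := by rw [← mul_pow]; norm_num
  have c1 : (2 : ℝ) ^ l * ((1 - (1/2) ^ (l + 1)) - 1) + 1 = 1/2 := by
    rw [pow_succ]
    linear_combination (-(1 : ℝ)/2) * hml
  have hkl2 : (2 : ℝ) ^ k ≤ 2 ^ l := pow_le_pow_right₀ (by norm_num) hkl.le
  have hp1 : (0 : ℝ) ≤ (1/2) ^ (l + 1) := by positivity
  have c2 : (1 : ℝ)/2 ≤ 2 ^ k * ((1 - (1/2) ^ (l + 1)) - 1) + 1 := by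
    have h2 : (2 : ℝ) ^ k * (1/2) ^ (l + 1) ≤ 2 ^ l * (1/2) ^ (l + 1) :=
      mul_le_mul_of_nonneg_right hkl2 hp1
    have h3 : (2 : ℝ) ^ l * (1/2) ^ (l + 1) = 1/2 := by
      rw [pow_succ]; linear_combination ((1 : ℝ)/2) * hml
    nlinarith
  have hsign : ((-1 : ℝ)) ^ k * (-1) ^ l = -1 := by
    rw [← pow_add]; exact Odd.neg_one_pow hodd
  have hε2 : ε ^ 2 = 1 := by rcases hε with rfl | rfl <;> norm_num
  have hq : (((-1 : ℝ) ^ l * ε) * x) * (((-1 : ℝ) ^ k * ε) * x) = -(x ^ 2) := by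
    linear_combination (ε ^ 2 * x ^ 2) * hsign + (-(x ^ 2)) * hε2
  have f1 : 0 < ((-1 : ℝ) ^ l * ε) * x := by nlinarith
  have f2 : 0 < ((-1 : ℝ) ^ k * ε) * x := by nlinarith
  nlinarith [mul_pos f1 f2]

theorem stmt0 (k l : ℕ) (hk : 1 ≤ k) (hkl : k < l) (hgcd : Nat.gcd k l = 1)
    (hodd : Odd (k + l)) (a : ℕ → ℝ)
    (h0 : ∀ n < l, a n = (1 + (-1 : ℝ) ^ (n / k + 1)) / 2)
    (h1 : ∀ n, l ≤ n → a n = 1 - (a (n - k) + a (n - l)) / 2) :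
    Tendsto a atTop (nhds (1 / 2)) := by
  set b : ℕ → ℝ := fun n => a n - 1/2 with hbdef
  have hrec : ∀ n, l ≤ n → b n = -(b (n - k) + b (n - l)) / 2 := by
    intro n hn
    simp only [hbdef]
    rw [h1 n hn]
    ring
  have base : ∀ m, |b m| ≤ 1/2 := by
    intro m
    induction m using Nat.strong_induction_on with
    | _ m ih =>
      rcases lt_or_ge m l with h | h
      · have hm := h0 m h
        have hbm : b m = a m - 1/2 := rfl
        rcases Nat.even_or_odd (m / k + 1) with he | he
        · rw [hbm, hm, he.neg_one_pow]; rw [abs_le]; norm_num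
        · rw [hbm, hm, he.neg_one_pow]; rw [abs_le]; norm_num
      · have hrm := hrec m h
        have i1 := ih (m - k) (by omega)
        have i2 := ih (m - l) (by omega)
        rw [hrm]
        rw [abs_le] at i1 i2 ⊢
        constructor <;> [linarith; linarith]
  set C : ℝ := 1 - (1/2 : ℝ) ^ (l + 1) with hC
  have hp1 : (0 : ℝ) < (1/2 : ℝ) ^ (l + 1) := by positivity
  have hp2 : (1/2 : ℝ) ^ (l + 1) ≤ 1 := by
    apply pow_le_one₀ <;> norm_num
  have hC0 : 0 ≤ C := by rw [hC]; linarith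
  have hC1 : C < 1 := by rw [hC]; linarith
  have iter : ∀ j m, j * (l + k * l) ≤ m → |b m| ≤ C ^ j * (1/2) := by
    intro j
    induction j with
    | zero => intro m _; simpa using base m
    | succ j ih =>
      intro m hm
      have hmul : (j + 1) * (l + k * l) = j * (l + k * l) + (l + k * l) := by ring
      have hcon := mycontract k l hkl hodd b hrec (j * (l + k * l)) (C ^ j * (1/2))
        (by have := pow_nonneg hC0 j; linarith) ih m (by omega)
      rw [← hC] at hcon
      calc |b m| ≤ C * (C ^ j * (1/2)) := hcon
        _ = C ^ (j + 1) * (1/2) := by ring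
  rw [Metric.tendsto_atTop]
  intro ε hε
  obtain ⟨j, hj⟩ := exists_pow_lt_of_lt_one hε hC1
  refine ⟨j * (l + k * l), fun n hn => ?_⟩
  have hiter := iter j n hn
  have hbn : b n = a n - 1/2 := rfl
  have hCj : 0 ≤ C ^ j := pow_nonneg hC0 j
  rw [Real.dist_eq]
  rw [hbn] at hiter
  linarith
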